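/- arXiv:2510.20619 — 2 statements merged into one kernel-verified Lean document; each statement's English description precedes it below -/
import Mathlib

section
/- Let X be a complex Hilbert space and A₀ a densely defined, closed, skew-symmetric unbounded operator on X, i.e., ⟨A₀x, y⟩ = −⟨x, A₀y⟩ for all x, y in the domain of A₀, and let A₀* denote its Hilbert-space adjoint. Let U be a complex Hilbert space and B₁, B₂ : dom(A₀*) → U linear maps such that (i) the map x ↦ (B₁x, B₂x) from dom(A₀*) to U × U is surjective, and (ii) the abstract Green identity ⟨A₀*x, y⟩ + ⟨x, A₀*y⟩ = ⟨B₁x, B₂y⟩ + ⟨B₂x, B₁y⟩ holds for all x, y ∈ dom(A₀*). Then for every maximally dissipative linear relation Θ ⊆ U × U, the operator A_Θ obtained by restricting A₀* to the domain {x ∈ dom(A₀*) : (B₁x, B₂x) ∈ Θ} is maximally dissipative: Re⟨A_Θ x, x⟩ ≤ 0 for all x in its domain, and the graph of A_Θ admits no proper extension to a dissipative linear relation on X. -/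
open scoped InnerProductSpace

/-- A linear relation `T` on a complex Hilbert space `H` is dissipative if
`Re ⟨x, y⟩ ≤ 0` for every `(x, y) ∈ T`. -/
def IsDissipativeRel {H : Type*} [NormedAddCommGroup H] [InnerProductSpace ℂ H]
    (T : Submodule ℂ (H × H)) : Prop :=
  ∀ p ∈ T, (inner ℂ p.1 p.2 : ℂ).re ≤ 0

/-- A linear relation is maximally dissipative if it is dissipative and every dissipative
linear relation containing it equals it. -/
def IsMaxDissipativeRel {H : Type*} [NormedAddCommGroup H] [InnerProductSpace ℂ H]
    (T : Submodule ℂ (H × H)) : Prop :=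
  IsDissipativeRel T ∧
    ∀ T' : Submodule ℂ (H × H), IsDissipativeRel T' → T ≤ T' → T' = T

private lemma re_inner_symm' {H : Type*} [NormedAddCommGroup H] [InnerProductSpace ℂ H]
    (a b : H) : (inner ℂ a b : ℂ).re = (inner ℂ b a : ℂ).re := by
  rw [← inner_conj_symm a b]
  exact Complex.conj_re _

private lemma keyC {a b : ℂ} {K : ℝ}
    (h : ∀ c : ℂ, K + (c * a + (starRingEnd ℂ) c * b).re ≤ 0) :
    a = -(starRingEnd ℂ) b := by
  have hzero : ∀ c : ℂ, (c * a + (starRingEnd ℂ) c * b).re = 0 := by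
    intro c
    by_contra hL
    set L : ℝ := (c * a + (starRingEnd ℂ) c * b).re with hLdef
    have hL' : L ≠ 0 := hL
    have ht := h (((1 - K) / L : ℝ) • c)
    have : ((((1 - K) / L : ℝ) • c) * a + (starRingEnd ℂ) (((1 - K) / L : ℝ) • c) * b).re
        = ((1 - K) / L) * L := by
      simp only [Complex.real_smul, map_mul, Complex.conj_ofReal]
      rw [mul_assoc, mul_assoc, ← mul_add, Complex.re_ofReal_mul]
    rw [this, div_mul_cancel₀ _ hL'] at ht
    linarith
  have h1 := hzero 1
  have hi := hzero Complex.I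
  simp only [one_mul, map_one, Complex.add_re, Complex.mul_re, Complex.I_re, Complex.I_im,
    map_neg, Complex.conj_I, Complex.neg_re, Complex.neg_im] at h1 hi
  apply Complex.ext <;>
    simp only [Complex.neg_re, Complex.neg_im, Complex.conj_re, Complex.conj_im] <;> linarith

private lemma expand_re' {H : Type*} [NormedAddCommGroup H] [InnerProductSpace ℂ H]
    (x' y' v w : H) (hw : (inner ℂ v w : ℂ).re = 0) (c : ℂ) :
    (inner ℂ (x' + c • v) (y' + c • w) : ℂ).re
      = (inner ℂ x' y' : ℂ).re
        + (c * (inner ℂ x' w : ℂ) + (starRingEnd ℂ) c * (inner ℂ v y' : ℂ)).re := by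
  have h0a : ((starRingEnd ℂ) c * (c * (inner ℂ v w : ℂ))).re = 0 := by
    rw [← mul_assoc, mul_comm ((starRingEnd ℂ) c) c, Complex.mul_conj, Complex.re_ofReal_mul,
      hw, mul_zero]
  have h0b : (c * ((starRingEnd ℂ) c * (inner ℂ v w : ℂ))).re = 0 := by
    rw [← mul_assoc, Complex.mul_conj, Complex.re_ofReal_mul, hw, mul_zero]
  simp only [inner_add_left, inner_add_right, inner_smul_left, inner_smul_right,
    mul_add, Complex.add_re] at *
  linarith

set_option maxHeartbeats 1000000 in
/-- Let `A₀` be a densely defined, closed, skew-symmetric operator on a complex Hilbert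
space `X`, and let `(U, B₁, B₂)` be a boundary triple for `A₀*`: the combined boundary map
is surjective and the abstract Green identity holds.  Then for every maximally dissipative
linear relation `Θ` on `U`, the restriction `A_Θ` of `A₀*` to
`{x ∈ dom A₀* : (B₁ x, B₂ x) ∈ Θ}` is maximally dissipative, i.e. its graph
`{(x, A₀* x) : x ∈ dom A_Θ}` is a dissipative linear relation on `X` having no proper
dissipative extension. -/
theorem boundary_triple_restriction_maxDissipative
    {X : Type*} [NormedAddCommGroup X] [InnerProductSpace ℂ X] [CompleteSpace X]
    {U : Type*} [NormedAddCommGroup U] [InnerProductSpace ℂ U] [CompleteSpace U]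
    (A₀ : X →ₗ.[ℂ] X)
    (hdense : Dense (A₀.domain : Set X))
    (hclosed : A₀.IsClosed)
    (hskew : ∀ x y : A₀.domain,
      (inner ℂ (A₀ x) (y : X) : ℂ) = -(inner ℂ (x : X) (A₀ y) : ℂ))
    (B₁ B₂ : A₀.adjoint.domain →ₗ[ℂ] U)
    (hsurj : Function.Surjective fun x : A₀.adjoint.domain => (B₁ x, B₂ x))
    (hgreen : ∀ x y : A₀.adjoint.domain,
      (inner ℂ (A₀.adjoint x) (y : X) : ℂ) + (inner ℂ (x : X) (A₀.adjoint y) : ℂ) =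
        (inner ℂ (B₁ x) (B₂ y) : ℂ) + (inner ℂ (B₂ x) (B₁ y) : ℂ))
    (Θ : Submodule ℂ (U × U)) (hΘ : IsMaxDissipativeRel Θ) :
    IsMaxDissipativeRel
      (Submodule.map ((A₀.adjoint.domain.subtype).prod A₀.adjoint.toFun)
        (Submodule.comap (B₁.prod B₂) Θ)) := by
  classical
  set J : A₀.adjoint.domain →ₗ[ℂ] X × X := (A₀.adjoint.domain.subtype).prod A₀.adjoint.toFun
    with hJdef
  set Φ : A₀.adjoint.domain →ₗ[ℂ] U × U := B₁.prod B₂ with hΦdef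
  have hJ : ∀ x : A₀.adjoint.domain, J x = ((x : X), A₀.adjoint x) := fun x => rfl
  have hΦ : ∀ x : A₀.adjoint.domain, Φ x = (B₁ x, B₂ x) := fun x => rfl
  set G : Submodule ℂ (X × X) := Submodule.map J (Submodule.comap Φ Θ) with hGdef
  -- diagonal Green identity
  have hdiag : ∀ x : A₀.adjoint.domain,
      (inner ℂ (x : X) (A₀.adjoint x) : ℂ).re = (inner ℂ (B₁ x) (B₂ x) : ℂ).re := by
    intro x
    have h := congrArg Complex.re (hgreen x x)
    rw [Complex.add_re, Complex.add_re, re_inner_symm' (A₀.adjoint x) ((x : X)),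
      re_inner_symm' (B₂ x) (B₁ x)] at h
    linarith
  -- `-A₀` is contained in the adjoint
  have hfa0 : A₀.IsFormalAdjoint (-A₀) := by
    intro u v
    have h1 : (-A₀) v = -(A₀ ⟨(v : X), v.2⟩) := LinearPMap.neg_apply A₀ v
    rw [h1, inner_neg_right, ← hskew u ⟨(v : X), v.2⟩]
  have hle : (-A₀) ≤ A₀.adjoint := hfa0.le_adjoint hdense
  have hmem0 : ∀ v : A₀.domain, (v : X) ∈ A₀.adjoint.domain := fun v => hle.1 v.2
  have hval0 : ∀ v : A₀.domain, A₀.adjoint ⟨(v : X), hmem0 v⟩ = -(A₀ v) := by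
    intro v
    have h := hle.2 (x := ⟨(v : X), v.2⟩) (y := ⟨(v : X), hmem0 v⟩) rfl
    rw [← h, LinearPMap.neg_apply]
    rfl
  -- skewness on the diagonal
  have hskew0 : ∀ v : A₀.domain, (inner ℂ (v : X) (-(A₀ v)) : ℂ).re = 0 := by
    intro v
    have h := congrArg Complex.re (hskew v v)
    rw [re_inner_symm' (A₀ v) ((v : X)), Complex.neg_re] at h
    rw [inner_neg_right, Complex.neg_re]
    linarith
  -- dom A₀ has zero boundary values
  have hB0 : ∀ v : A₀.domain, B₁ ⟨(v : X), hmem0 v⟩ = 0 ∧ B₂ ⟨(v : X), hmem0 v⟩ = 0 := by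
    intro v
    set w : A₀.adjoint.domain := ⟨(v : X), hmem0 v⟩ with hwdef
    have hsum : ∀ y : A₀.adjoint.domain,
        (inner ℂ (B₁ w) (B₂ y) : ℂ) + (inner ℂ (B₂ w) (B₁ y) : ℂ) = 0 := by
      intro y
      rw [← hgreen w y]
      have h2 : (inner ℂ ((w : X)) (A₀.adjoint y) : ℂ) = inner ℂ (A₀ v) ((y : X)) := by
        rw [← inner_conj_symm, LinearPMap.adjoint_isFormalAdjoint hdense y v,
          inner_conj_symm]
      rw [hval0 v, h2, inner_neg_left, neg_add_cancel]
    obtain ⟨y, hy⟩ := hsurj (B₂ w, B₁ w)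
    have h := hsum y
    rw [show B₂ y = B₁ w from congrArg Prod.snd hy,
      show B₁ y = B₂ w from congrArg Prod.fst hy] at h
    have hre := congrArg Complex.re h
    have him1 : (inner ℂ (B₁ w) (B₁ w) : ℂ).im = 0 := inner_self_im (𝕜 := ℂ) (B₁ w)
    have him2 : (inner ℂ (B₂ w) (B₂ w) : ℂ).im = 0 := inner_self_im (𝕜 := ℂ) (B₂ w)
    have hre1 : (0 : ℝ) ≤ (inner ℂ (B₁ w) (B₁ w) : ℂ).re := inner_self_nonneg (𝕜 := ℂ) (x := B₁ w)
    have hre2 : (0 : ℝ) ≤ (inner ℂ (B₂ w) (B₂ w) : ℂ).re := inner_self_nonneg (𝕜 := ℂ) (x := B₂ w)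
    rw [Complex.add_re, Complex.zero_re] at hre
    constructor
    · rw [← inner_self_eq_zero (𝕜 := ℂ) (x := B₁ w)]
      apply Complex.ext
      · simp only [Complex.zero_re]; linarith
      · simp only [Complex.zero_im]; exact him1
    · rw [← inner_self_eq_zero (𝕜 := ℂ) (x := B₂ w)]
      apply Complex.ext
      · simp only [Complex.zero_re]; linarith
      · simp only [Complex.zero_im]; exact him2
  -- graph elements coming from dom A₀
  have hmemG : ∀ v : A₀.domain, ((v : X), -(A₀ v)) ∈ G := by
    intro v
    refine ⟨⟨(v : X), hmem0 v⟩, ?_, ?_⟩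
    · show Φ _ ∈ Θ
      rw [hΦ, (hB0 v).1, (hB0 v).2]
      exact Θ.zero_mem
    · rw [hJ, hval0 v]
  constructor
  · -- dissipativity
    rintro p ⟨x, hx, rfl⟩
    have h : (inner ℂ (B₁ x) (B₂ x) : ℂ).re ≤ 0 := hΘ.1 (Φ x) hx
    show (inner ℂ ((x : X)) (A₀.adjoint x) : ℂ).re ≤ 0
    rw [hdiag x]
    exact h
  · -- maximality
    intro T' hT' hGT'
    refine le_antisymm ?_ hGT'
    rintro ⟨x', y'⟩ hp
    -- key identity: x' is in the domain of the adjoint with value y'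
    have key : ∀ v : A₀.domain, (inner ℂ (A₀ v) x' : ℂ) = inner ℂ (v : X) y' := by
      intro v
      have hid : ∀ c : ℂ,
          (inner ℂ x' y' : ℂ).re +
            (c * (inner ℂ x' (-(A₀ v) : X) : ℂ) +
              (starRingEnd ℂ) c * (inner ℂ ((v : X)) y' : ℂ)).re ≤ 0 := by
        intro c
        have hmem : ((x', y') + c • (((v : X)), -(A₀ v))) ∈ T' :=
          T'.add_mem hp (T'.smul_mem c (hGT' (hmemG v)))
        have h := hT' _ hmem
        simp only [Prod.fst_add, Prod.snd_add, Prod.smul_fst, Prod.smul_snd] at h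
        rwa [expand_re' x' y' ((v : X)) (-(A₀ v)) (hskew0 v) c] at h
      have h := keyC hid
      rw [inner_neg_right, neg_inj] at h
      rw [← inner_conj_symm (A₀ v : X) x', h, Complex.conj_conj]
    -- build the span-singleton pmap and use maximality of the adjoint
    have Hy : ∀ c : ℂ, c • x' = 0 → c • y' = 0 := by
      intro c hc
      rcases smul_eq_zero.1 hc with h | h
      · rw [h, zero_smul]
      · have hy0 : y' = 0 := by
          apply hdense.eq_zero_of_inner_right ℂ
          intro v hv
          have := key ⟨v, hv⟩
          rw [h, inner_zero_right] at this
          exact this.symm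
        rw [hy0, smul_zero]
    set S : X →ₗ.[ℂ] X := LinearPMap.mkSpanSingleton' x' y' Hy with hSdef
    have hfaS : A₀.IsFormalAdjoint S := by
      intro u w
      have hw2 : (w : X) ∈ Submodule.span ℂ {x'} := w.2
      obtain ⟨c, hc⟩ := Submodule.mem_span_singleton.1 hw2
      have hww : w = ⟨c • x', hc ▸ w.2⟩ := Subtype.ext hc.symm
      rw [hww, LinearPMap.mkSpanSingleton'_apply]
      show (inner ℂ (A₀ u) (c • x') : ℂ) = inner ℂ ((u : X)) (c • y')
      rw [inner_smul_right, inner_smul_right, key u]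
    have hleS : S ≤ A₀.adjoint := hfaS.le_adjoint hdense
    have hx'mem : x' ∈ S.domain := Submodule.mem_span_singleton_self x'
    set xh : A₀.adjoint.domain := ⟨x', hleS.1 hx'mem⟩ with hxhdef
    have hval : A₀.adjoint xh = y' := by
      have h := hleS.2 (x := ⟨x', hx'mem⟩) (y := xh) rfl
      rw [← h, LinearPMap.mkSpanSingleton'_apply_self]
    -- the boundary relation generated by T'
    set Θ' : Submodule ℂ (U × U) := Submodule.map Φ (Submodule.comap J T') with hΘ'def
    have hΘ'dis : IsDissipativeRel Θ' := by
      rintro q ⟨z, hz, rfl⟩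
      have h : (inner ℂ ((z : X)) (A₀.adjoint z) : ℂ).re ≤ 0 := hT' (J z) hz
      show (inner ℂ (B₁ z) (B₂ z) : ℂ).re ≤ 0
      rw [← hdiag z]
      exact h
    have hΘΘ' : Θ ≤ Θ' := by
      intro θ hθ
      obtain ⟨s, hs⟩ := hsurj θ
      have hsΦ : Φ s = θ := hs
      refine ⟨s, ?_, hsΦ⟩
      show J s ∈ T'
      exact hGT' ⟨s, show Φ s ∈ Θ from hsΦ ▸ hθ, rfl⟩
    have hEq := hΘ.2 Θ' hΘ'dis hΘΘ'
    have hxhT' : J xh ∈ T' := by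
      have : J xh = (x', y') := by rw [hJ, hval]
      rw [this]
      exact hp
    have hΦxh : Φ xh ∈ Θ := by
      rw [← hEq]
      exact ⟨xh, hxhT', rfl⟩
    exact ⟨xh, hΦxh, by rw [hJ, hval]⟩
end

section
/- Let X be a complex Hilbert space and A₀ a densely defined, closed, skew-symmetric unbounded operator on X, i.e., ⟨A₀x, y⟩ = −⟨x, A₀y⟩ for all x, y in the domain of A₀, and let A₀* denote its Hilbert-space adjoint. Let k be a natural number, and let B₁, B₂ : dom(A₀*) → ℂ^{2k} be linear maps such that (i) the map x ↦ (B₁x, B₂x) from dom(A₀*) to ℂ^{2k} × ℂ^{2k} is surjective, and (ii) the abstract Green identity ⟨A₀*x, y⟩ + ⟨x, A₀*y⟩ = ⟨B₁x, B₂y⟩ + ⟨B₂x, B₁y⟩ holds for all x, y ∈ dom(A₀*). Let W₁, W₂ ∈ ℂ^{2k×2k} be such that the 2k×4k matrix W_B = [W₁ W₂] has full row rank 2k and W₁W₂* + W₂W₁* is positive semidefinite. Then the operator 𝔄 obtained by restricting A₀* to the domain {x ∈ dom(A₀*) : W₁(B₁x) + W₂(B₂x) = 0} is maximally dissipative: Re⟨𝔄x,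 x⟩ ≤ 0 for all x in its domain, and the graph of 𝔄 admits no proper extension to a dissipative linear relation on X. -/
open Matrix
open scoped InnerProductSpace ComplexOrder

private lemma star_dot_comm {n : ℕ} (u v : Fin n → ℂ) :
    star v ⬝ᵥ u = (starRingEnd ℂ) (star u ⬝ᵥ v) := by
  show star v ⬝ᵥ u = star (star u ⬝ᵥ v)
  exact Matrix.star_dotProduct (v := v) (w := u)

private lemma matkey {n : ℕ} (W₁ W₂ : Matrix (Fin n) (Fin n) ℂ)
    (hrank : (Matrix.fromCols W₁ W₂).rank = n)
    (hpos : (W₁ * W₂ᴴ + W₂ * W₁ᴴ).PosSemidef) :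
    ∀ u v : Fin n → ℂ, W₁ *ᵥ u + W₂ *ᵥ v = 0 → (star u ⬝ᵥ v : ℂ).re ≤ 0 := by
  -- the combined matrix is surjective
  have hWsurj : Function.Surjective (Matrix.fromCols W₁ W₂).mulVecLin := by
    rw [← LinearMap.range_eq_top]
    apply Submodule.eq_top_of_finrank_eq
    rw [← Matrix.rank, hrank, Module.finrank_pi]
    simp
  -- joint injectivity of the conjugate transposes
  have hW : ∀ x : Fin n → ℂ, W₁ᴴ *ᵥ x = 0 → W₂ᴴ *ᵥ x = 0 → x = 0 := by
    intro x h1 h2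
    have hv1 : star x ᵥ* W₁ = 0 := by
      have := congrArg star h1
      rwa [star_mulVec, conjTranspose_conjTranspose, star_zero] at this
    have hv2 : star x ᵥ* W₂ = 0 := by
      have := congrArg star h2
      rwa [star_mulVec, conjTranspose_conjTranspose, star_zero] at this
    obtain ⟨y, hy⟩ := hWsurj x
    have e : star x ⬝ᵥ x = (star x ᵥ* (Matrix.fromCols W₁ W₂)) ⬝ᵥ y := by
      rw [← dotProduct_mulVec, ← Matrix.mulVecLin_apply, hy]
    rw [vecMul_fromCols, hv1, hv2] at e
    have : star x ⬝ᵥ x = 0 := by rw [e]; simp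
    exact dotProduct_star_self_eq_zero.mp this
  set S : Matrix (Fin n) (Fin n) ℂ := W₁ * W₂ᴴ + W₂ * W₁ᴴ with hS
  set G : Matrix (Fin n) (Fin n) ℂ := W₁ + W₂ with hG
  set H : Matrix (Fin n) (Fin n) ℂ := W₁ - W₂ with hH
  -- Gᴴ kills only zero
  have hGH0 : ∀ x : Fin n → ℂ, Gᴴ *ᵥ x = 0 → x = 0 := by
    intro x hx
    have e1 : star (W₁ᴴ *ᵥ x) ⬝ᵥ (W₂ᴴ *ᵥ x) = star x ⬝ᵥ ((W₁ * W₂ᴴ) *ᵥ x) := by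
      rw [star_mulVec, conjTranspose_conjTranspose, ← dotProduct_mulVec, mulVec_mulVec]
    have e2 : star (W₂ᴴ *ᵥ x) ⬝ᵥ (W₁ᴴ *ᵥ x) = star x ⬝ᵥ ((W₂ * W₁ᴴ) *ᵥ x) := by
      rw [star_mulVec, conjTranspose_conjTranspose, ← dotProduct_mulVec, mulVec_mulVec]
    have hGx : Gᴴ *ᵥ x = W₁ᴴ *ᵥ x + W₂ᴴ *ᵥ x := by
      rw [hG, conjTranspose_add, add_mulVec]
    have key : star (W₁ᴴ *ᵥ x) ⬝ᵥ (W₁ᴴ *ᵥ x) + star (W₂ᴴ *ᵥ x) ⬝ᵥ (W₂ᴴ *ᵥ x)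
        + star x ⬝ᵥ (S *ᵥ x) = 0 := by
      calc star (W₁ᴴ *ᵥ x) ⬝ᵥ (W₁ᴴ *ᵥ x) + star (W₂ᴴ *ᵥ x) ⬝ᵥ (W₂ᴴ *ᵥ x)
            + star x ⬝ᵥ (S *ᵥ x)
          = star (W₁ᴴ *ᵥ x) ⬝ᵥ (W₁ᴴ *ᵥ x) + star (W₂ᴴ *ᵥ x) ⬝ᵥ (W₂ᴴ *ᵥ x)
            + (star (W₁ᴴ *ᵥ x) ⬝ᵥ (W₂ᴴ *ᵥ x) + star (W₂ᴴ *ᵥ x) ⬝ᵥ (W₁ᴴ *ᵥ x)) := by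
            rw [hS, add_mulVec, dotProduct_add, e1, e2]
        _ = star (Gᴴ *ᵥ x) ⬝ᵥ (Gᴴ *ᵥ x) := by
            rw [hGx, star_add, add_dotProduct, dotProduct_add, dotProduct_add]
            ring
        _ = 0 := by rw [hx]; simp
    have t1 : (0:ℂ) ≤ star (W₁ᴴ *ᵥ x) ⬝ᵥ (W₁ᴴ *ᵥ x) := dotProduct_star_self_nonneg _
    have t2 : (0:ℂ) ≤ star (W₂ᴴ *ᵥ x) ⬝ᵥ (W₂ᴴ *ᵥ x) := dotProduct_star_self_nonneg _
    have t3 : (0:ℂ) ≤ star x ⬝ᵥ (S *ᵥ x) := hpos.dotProduct_mulVec_nonneg x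
    have z1 : star (W₁ᴴ *ᵥ x) ⬝ᵥ (W₁ᴴ *ᵥ x) = 0 := by
      apply le_antisymm _ t1
      calc star (W₁ᴴ *ᵥ x) ⬝ᵥ (W₁ᴴ *ᵥ x)
          ≤ star (W₁ᴴ *ᵥ x) ⬝ᵥ (W₁ᴴ *ᵥ x) + (star (W₂ᴴ *ᵥ x) ⬝ᵥ (W₂ᴴ *ᵥ x)
            + star x ⬝ᵥ (S *ᵥ x)) := le_add_of_nonneg_right (add_nonneg t2 t3)
        _ = star (W₁ᴴ *ᵥ x) ⬝ᵥ (W₁ᴴ *ᵥ x) + star (W₂ᴴ *ᵥ x) ⬝ᵥ (W₂ᴴ *ᵥ x)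
            + star x ⬝ᵥ (S *ᵥ x) := by ring
        _ = 0 := key
    have z2 : star (W₂ᴴ *ᵥ x) ⬝ᵥ (W₂ᴴ *ᵥ x) = 0 := by
      apply le_antisymm _ t2
      calc star (W₂ᴴ *ᵥ x) ⬝ᵥ (W₂ᴴ *ᵥ x)
          ≤ star (W₂ᴴ *ᵥ x) ⬝ᵥ (W₂ᴴ *ᵥ x) + (star (W₁ᴴ *ᵥ x) ⬝ᵥ (W₁ᴴ *ᵥ x)
            + star x ⬝ᵥ (S *ᵥ x)) := le_add_of_nonneg_right (add_nonneg t1 t3)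
        _ = star (W₁ᴴ *ᵥ x) ⬝ᵥ (W₁ᴴ *ᵥ x) + star (W₂ᴴ *ᵥ x) ⬝ᵥ (W₂ᴴ *ᵥ x)
            + star x ⬝ᵥ (S *ᵥ x) := by ring
        _ = 0 := key
    exact hW x (dotProduct_star_self_eq_zero.mp z1) (dotProduct_star_self_eq_zero.mp z2)
  have hGHinj : Function.Injective Gᴴ.mulVec := by
    intro a b hab
    have : Gᴴ *ᵥ (a - b) = 0 := by rw [mulVec_sub, hab, sub_self]
    have := hGH0 _ this
    exact sub_eq_zero.mp this
  have hGHunit : IsUnit Gᴴ := Matrix.mulVec_injective_iff_isUnit.mp hGHinj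
  have hGunit : IsUnit G := (Matrix.isUnit_conjTranspose (A := G)).mp hGHunit
  have hGdet : IsUnit G.det := (Matrix.isUnit_iff_isUnit_det G).mp hGunit
  have hGHdet : IsUnit Gᴴ.det := (Matrix.isUnit_iff_isUnit_det Gᴴ).mp hGHunit
  set C : Matrix (Fin n) (Fin n) ℂ := G⁻¹ * H with hC
  have hId : 1 - C * Cᴴ = G⁻¹ * (S + S) * (G⁻¹)ᴴ := by
    have h1 : Cᴴ = Hᴴ * (Gᴴ)⁻¹ := by
      rw [hC, conjTranspose_mul, Matrix.conjTranspose_nonsing_inv]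
    have h2 : (G⁻¹)ᴴ = (Gᴴ)⁻¹ := Matrix.conjTranspose_nonsing_inv G
    have hSS : S + S = G * Gᴴ - H * Hᴴ := by
      rw [hS, hG, hH, conjTranspose_add, conjTranspose_sub]
      noncomm_ring
    rw [h2, hSS, hC, h1]
    have e3 : G⁻¹ * (G * Gᴴ - H * Hᴴ) * Gᴴ⁻¹
        = G⁻¹ * G * (Gᴴ * Gᴴ⁻¹) - G⁻¹ * H * (Hᴴ * Gᴴ⁻¹) := by noncomm_ring
    rw [e3, Matrix.nonsing_inv_mul G hGdet, Matrix.mul_nonsing_inv Gᴴ hGHdet]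
    noncomm_ring
  have hPSD : (1 - C * Cᴴ).PosSemidef := by
    rw [hId]
    exact (hpos.add hpos).mul_mul_conjTranspose_same G⁻¹
  -- move to the Euclidean space picture
  set φ : (Fin n → ℂ) → EuclideanSpace ℂ (Fin n) := fun w => (WithLp.equiv 2 _).symm w with hφ
  have hinner : ∀ a b : Fin n → ℂ, (inner ℂ (φ a) (φ b) : ℂ) = star a ⬝ᵥ b := fun a b =>
    (EuclideanSpace.inner_toLp_toLp a b).trans (dotProduct_comm _ _)
  have hφadd : ∀ a b : Fin n → ℂ, φ (a + b) = φ a + φ b := fun a b => rfl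
  have hφsub : ∀ a b : Fin n → ℂ, φ (a - b) = φ a - φ b := fun a b => rfl
  have hφneg : ∀ a : Fin n → ℂ, φ (-a) = -(φ a) := fun a => rfl
  have hsq : ∀ a : Fin n → ℂ, (inner ℂ (φ a) (φ a) : ℂ) = ((‖φ a‖ : ℂ))^2 := fun a =>
    inner_self_eq_norm_sq_to_K (φ a)
  have hCT : ∀ x : Fin n → ℂ, ‖φ (Cᴴ *ᵥ x)‖ ≤ ‖φ x‖ := by
    intro x
    have h0 := hPSD.dotProduct_mulVec_nonneg x
    have e : star x ⬝ᵥ ((1 - C * Cᴴ) *ᵥ x)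
        = star x ⬝ᵥ x - star (Cᴴ *ᵥ x) ⬝ᵥ (Cᴴ *ᵥ x) := by
      rw [sub_mulVec, one_mulVec, ← mulVec_mulVec, dotProduct_sub]
      congr 1
      rw [star_mulVec, conjTranspose_conjTranspose, dotProduct_mulVec]
    rw [e, ← hinner, ← hinner, hsq, hsq] at h0
    have h1 : (0:ℂ) ≤ ((‖φ x‖^2 - ‖φ (Cᴴ *ᵥ x)‖^2 : ℝ) : ℂ) := by
      rw [Complex.ofReal_sub, Complex.ofReal_pow, Complex.ofReal_pow]
      exact h0
    rw [Complex.zero_le_real] at h1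
    nlinarith [norm_nonneg (φ x), norm_nonneg (φ (Cᴴ *ᵥ x))]
  have hcon : ∀ q : Fin n → ℂ, ‖φ (C *ᵥ q)‖ ≤ ‖φ q‖ := by
    intro q
    set p := C *ᵥ q with hp
    have h1 : ((‖φ p‖ : ℂ))^2 = inner ℂ (φ (Cᴴ *ᵥ p)) (φ q) := by
      rw [← hsq, hinner, hinner]
      conv_rhs => rw [star_mulVec, conjTranspose_conjTranspose, ← dotProduct_mulVec]
    have h2 : ‖φ p‖^2 = (inner ℂ (φ (Cᴴ *ᵥ p)) (φ q) : ℂ).re := by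
      rw [← h1, ← Complex.ofReal_pow, Complex.ofReal_re]
    have h3 : (inner ℂ (φ (Cᴴ *ᵥ p)) (φ q) : ℂ).re ≤ ‖φ (Cᴴ *ᵥ p)‖ * ‖φ q‖ := by
      calc (inner ℂ (φ (Cᴴ *ᵥ p)) (φ q) : ℂ).re ≤ ‖(inner ℂ (φ (Cᴴ *ᵥ p)) (φ q) : ℂ)‖ :=
            Complex.re_le_norm _
        _ ≤ ‖φ (Cᴴ *ᵥ p)‖ * ‖φ q‖ := norm_inner_le_norm _ _
    have h4 : ‖φ p‖^2 ≤ ‖φ p‖ * ‖φ q‖ :=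
      h2 ▸ (h3.trans (mul_le_mul_of_nonneg_right (hCT p) (norm_nonneg _)))
    rcases eq_or_lt_of_le (norm_nonneg (φ p)) with h5 | h5
    · rw [← h5]; exact norm_nonneg _
    · nlinarith
  -- final computation
  intro u v huv
  have hpq : G *ᵥ (u + v) + H *ᵥ (u - v) = 0 := by
    rw [hG, hH, add_mulVec, sub_mulVec, mulVec_add, mulVec_sub, mulVec_add, mulVec_sub]
    have : W₁ *ᵥ u + W₁ *ᵥ v + (W₂ *ᵥ u + W₂ *ᵥ v)
        + (W₁ *ᵥ u - W₁ *ᵥ v - (W₂ *ᵥ u - W₂ *ᵥ v))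
        = (W₁ *ᵥ u + W₂ *ᵥ v) + (W₁ *ᵥ u + W₂ *ᵥ v) := by abel
    rw [this, huv, add_zero]
  have hGinj : Function.Injective G.mulVec := Matrix.mulVec_injective_iff_isUnit.mpr hGunit
  have hGC : G * C = H := by
    rw [hC, ← Matrix.mul_assoc, Matrix.mul_nonsing_inv G hGdet, Matrix.one_mul]
  have hpq2 : u + v = -(C *ᵥ (u - v)) := by
    apply hGinj
    show G *ᵥ (u + v) = G *ᵥ (-(C *ᵥ (u - v)))
    rw [mulVec_neg, mulVec_mulVec, hGC]
    exact eq_neg_of_add_eq_zero_left hpq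
  have hnorm : ‖φ (u + v)‖ ≤ ‖φ (u - v)‖ := by
    rw [hpq2, hφneg, norm_neg]
    exact hcon (u - v)
  have hre : (star u ⬝ᵥ v : ℂ).re = (inner ℂ (φ u) (φ v) : ℂ).re := by rw [hinner]
  rw [hre]
  have hab : ‖φ u + φ v‖ ≤ ‖φ u - φ v‖ := by
    rw [← hφadd, ← hφsub]; exact hnorm
  have h1 : ‖φ u + φ v‖^2 = ‖φ u‖^2 + 2 * (inner ℂ (φ u) (φ v) : ℂ).re + ‖φ v‖^2 := by
    have := @norm_add_sq ℂ _ _ _ _ (φ u) (φ v)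
    simpa using this
  have h2 : ‖φ u - φ v‖^2 = ‖φ u‖^2 - 2 * (inner ℂ (φ u) (φ v) : ℂ).re + ‖φ v‖^2 := by
    have := @norm_sub_sq ℂ _ _ _ _ (φ u) (φ v)
    simpa using this
  nlinarith [norm_nonneg (φ u + φ v), norm_nonneg (φ u - φ v)]

private lemma pos_dim_le {n : ℕ} (L : Submodule ℂ ((Fin n → ℂ) × (Fin n → ℂ)))
    (hL : ∀ ξ ∈ L, ξ ≠ 0 → 0 < (star ξ.1 ⬝ᵥ ξ.2 : ℂ).re) :
    Module.finrank ℂ L ≤ n := by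
  have hinj : Function.Injective
      ((LinearMap.fst ℂ (Fin n → ℂ) (Fin n → ℂ) + LinearMap.snd ℂ _ _).comp L.subtype) := by
    rw [← LinearMap.ker_eq_bot, LinearMap.ker_eq_bot']
    intro ξ hξ
    simp only [LinearMap.comp_apply, LinearMap.add_apply, LinearMap.fst_apply,
      LinearMap.snd_apply, Submodule.coe_subtype] at hξ
    by_contra hne
    have hne' : (ξ : (Fin n → ℂ) × (Fin n → ℂ)) ≠ 0 := fun h => hne (Subtype.ext h)
    have hpos := hL ξ ξ.2 hne'
    have h2 : (ξ : (Fin n → ℂ) × (Fin n → ℂ)).2 = -(ξ : (Fin n → ℂ) × (Fin n → ℂ)).1 :=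
      eq_neg_of_add_eq_zero_right hξ
    rw [h2] at hpos
    have h3 : (0:ℂ) ≤ star (ξ : (Fin n → ℂ) × (Fin n → ℂ)).1 ⬝ᵥ (ξ : (Fin n → ℂ) × (Fin n → ℂ)).1 :=
      dotProduct_star_self_nonneg _
    have h4 : 0 ≤ (star (ξ : (Fin n → ℂ) × (Fin n → ℂ)).1 ⬝ᵥ (ξ : (Fin n → ℂ) × (Fin n → ℂ)).1).re :=
      (Complex.le_def.mp h3).1
    rw [dotProduct_neg] at hpos
    rw [Complex.neg_re] at hpos
    linarith
  calc Module.finrank ℂ L ≤ Module.finrank ℂ (Fin n → ℂ) :=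
        LinearMap.finrank_le_finrank_of_injective hinj
    _ = n := by rw [Module.finrank_pi]; simp

private lemma neg_dim_le {n : ℕ} (L : Submodule ℂ ((Fin n → ℂ) × (Fin n → ℂ)))
    (hL : ∀ ξ ∈ L, ξ ≠ 0 → (star ξ.1 ⬝ᵥ ξ.2 : ℂ).re < 0) :
    Module.finrank ℂ L ≤ n := by
  have hinj : Function.Injective
      ((LinearMap.fst ℂ (Fin n → ℂ) (Fin n → ℂ) - LinearMap.snd ℂ _ _).comp L.subtype) := by
    rw [← LinearMap.ker_eq_bot, LinearMap.ker_eq_bot']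
    intro ξ hξ
    simp only [LinearMap.comp_apply, LinearMap.sub_apply, LinearMap.fst_apply,
      LinearMap.snd_apply, Submodule.coe_subtype] at hξ
    by_contra hne
    have hne' : (ξ : (Fin n → ℂ) × (Fin n → ℂ)) ≠ 0 := fun h => hne (Subtype.ext h)
    have hpos := hL ξ ξ.2 hne'
    have h2 : (ξ : (Fin n → ℂ) × (Fin n → ℂ)).2 = (ξ : (Fin n → ℂ) × (Fin n → ℂ)).1 :=
      (sub_eq_zero.mp hξ).symm
    rw [h2] at hpos
    have h3 : (0:ℂ) ≤ star (ξ : (Fin n → ℂ) × (Fin n → ℂ)).1 ⬝ᵥ (ξ : (Fin n → ℂ) × (Fin n → ℂ)).1 :=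
      dotProduct_star_self_nonneg _
    have h4 : 0 ≤ (star (ξ : (Fin n → ℂ) × (Fin n → ℂ)).1 ⬝ᵥ (ξ : (Fin n → ℂ) × (Fin n → ℂ)).1).re :=
      (Complex.le_def.mp h3).1
    linarith
  calc Module.finrank ℂ L ≤ Module.finrank ℂ (Fin n → ℂ) :=
        LinearMap.finrank_le_finrank_of_injective hinj
    _ = n := by rw [Module.finrank_pi]; simp

private lemma range_closed {X : Type*} [NormedAddCommGroup X] [InnerProductSpace ℂ X]
    [CompleteSpace X] (A₀ : X →ₗ.[ℂ] X) (hclosed : A₀.IsClosed)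
    (hsk : ∀ a : A₀.domain, (inner ℂ (a : X) (A₀ a) : ℂ).re = 0) :
    IsClosed ((LinearMap.range (A₀.domain.subtype + A₀.toFun) : Submodule ℂ X) : Set X) := by
  have hkey : ∀ r : X × X, r ∈ A₀.graph → max ‖r.1‖ ‖r.2‖ ≤ ‖r.1 + r.2‖ := by
    intro r hr
    rcases A₀.mem_graph_iff.mp hr with ⟨a, ha1, ha2⟩
    have hre : (inner ℂ r.1 r.2 : ℂ).re = 0 := by
      rw [← ha1, ← ha2]; exact hsk a
    have hsq : ‖r.1 + r.2‖^2 = ‖r.1‖^2 + ‖r.2‖^2 := by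
      have := @norm_add_sq ℂ X _ _ _ r.1 r.2
      simp only [RCLike.re_to_complex] at this
      rw [this, hre]; ring
    have h1 : ‖r.1‖ ≤ ‖r.1 + r.2‖ := by
      nlinarith [norm_nonneg r.1, norm_nonneg r.2, norm_nonneg (r.1 + r.2)]
    have h2 : ‖r.2‖ ≤ ‖r.1 + r.2‖ := by
      nlinarith [norm_nonneg r.1, norm_nonneg r.2, norm_nonneg (r.1 + r.2)]
    exact max_le h1 h2
  haveI : CompleteSpace A₀.graph := (show IsClosed (A₀.graph : Set (X × X)) from hclosed).completeSpace_coe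
  set ψ : A₀.graph → X := fun r => (r : X × X).1 + (r : X × X).2 with hψ
  have hrange : Set.range ψ
      = ((LinearMap.range (A₀.domain.subtype + A₀.toFun) : Submodule ℂ X) : Set X) := by
    ext f
    constructor
    · rintro ⟨⟨r, hr⟩, rfl⟩
      rcases A₀.mem_graph_iff.mp hr with ⟨a, ha1, ha2⟩
      refine ⟨a, ?_⟩
      simp only [LinearMap.add_apply, Submodule.coe_subtype, LinearPMap.toFun_eq_coe, hψ, ha1, ha2]
    · rintro ⟨a, rfl⟩
      exact ⟨⟨((a : X), A₀ a), A₀.mem_graph a⟩, by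
        simp [hψ, LinearPMap.toFun_eq_coe]⟩
  rw [← hrange]
  have hanti : AntilipschitzWith 1 ψ := by
    apply AntilipschitzWith.of_le_mul_dist
    intro x y
    have hmem : ((x : X × X) - (y : X × X)) ∈ A₀.graph := sub_mem x.2 y.2
    have := hkey _ hmem
    rw [Subtype.dist_eq, Prod.dist_eq, dist_eq_norm, dist_eq_norm, dist_eq_norm]
    simp only [Prod.fst_sub, Prod.snd_sub] at this ⊢
    have heq : ((x : X × X).1 - (y : X × X).1) + ((x : X × X).2 - (y : X × X).2)
        = ψ x - ψ y := by simp [hψ]; abel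
    rw [heq] at this
    rw [NNReal.coe_one, one_mul]
    exact this
  have hlip : LipschitzWith 2 ψ := by
    apply LipschitzWith.of_dist_le_mul
    intro x y
    rw [Subtype.dist_eq, Prod.dist_eq, dist_eq_norm, dist_eq_norm, dist_eq_norm]
    have heq : ψ x - ψ y = ((x : X × X).1 - (y : X × X).1) + ((x : X × X).2 - (y : X × X).2) := by
      simp [hψ]; abel
    rw [heq]
    calc ‖((x : X × X).1 - (y : X × X).1) + ((x : X × X).2 - (y : X × X).2)‖
        ≤ ‖(x : X × X).1 - (y : X × X).1‖ + ‖(x : X × X).2 - (y : X × X).2‖ := norm_add_le _ _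
      _ ≤ 2 * max ‖(x : X × X).1 - (y : X × X).1‖ ‖(x : X × X).2 - (y : X × X).2‖ := by
          have := le_max_left ‖(x : X × X).1 - (y : X × X).1‖ ‖(x : X × X).2 - (y : X × X).2‖
          have := le_max_right ‖(x : X × X).1 - (y : X × X).1‖ ‖(x : X × X).2 - (y : X × X).2‖
          linarith
      _ = ((2 : NNReal) : ℝ) * max ‖(x : X × X).1 - (y : X × X).1‖ ‖(x : X × X).2 - (y : X × X).2‖ := by norm_num
  exact hanti.isClosed_range hlip.uniformContinuous

set_option maxHeartbeats 1600000 in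
set_option synthInstance.maxHeartbeats 400000 in
/-- Let `A₀` be a densely defined, closed, skew-symmetric operator on a complex Hilbert
space `X`, and let `(ℂ^{2k}, B₁, B₂)` be a boundary triple for `A₀*`: the combined boundary
map is surjective and the abstract Green identity holds, where on `ℂ^{2k}` the standard
Hermitian inner ℂ product `⟨v, w⟩ = star v ⬝ᵥ w` is used.  If `W_B = [W₁ W₂]` has full row
rank `2k` and `W₁W₂* + W₂W₁*` is positive semidefinite, then the restriction `𝔄` of `A₀*`
to `{x ∈ dom A₀* : W₁ (B₁ x) + W₂ (B₂ x) = 0}` is maximally dissipative, i.e. its graph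
`{(x, A₀* x) : x ∈ dom 𝔄}` is a dissipative linear relation on `X` having no proper
dissipative extension. -/
theorem boundary_triple_matrix_restriction_maxDissipative
    {X : Type*} [NormedAddCommGroup X] [InnerProductSpace ℂ X] [CompleteSpace X] (k : ℕ)
    (A₀ : X →ₗ.[ℂ] X)
    (hdense : Dense (A₀.domain : Set X))
    (hclosed : A₀.IsClosed)
    (hskew : ∀ x y : A₀.domain,
      (inner ℂ (A₀ x) (y : X) : ℂ) = -(inner ℂ (x : X) (A₀ y) : ℂ))
    (B₁ B₂ : A₀.adjoint.domain →ₗ[ℂ] (Fin (2 * k) → ℂ))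
    (hsurj : Function.Surjective fun x : A₀.adjoint.domain => (B₁ x, B₂ x))
    (hgreen : ∀ x y : A₀.adjoint.domain,
      (inner ℂ (A₀.adjoint x) (y : X) : ℂ) + (inner ℂ (x : X) (A₀.adjoint y) : ℂ) =
        star (B₁ x) ⬝ᵥ B₂ y + star (B₂ x) ⬝ᵥ B₁ y)
    (W₁ W₂ : Matrix (Fin (2 * k)) (Fin (2 * k)) ℂ)
    (hrank : (Matrix.fromCols W₁ W₂).rank = 2 * k)
    (hpos : (W₁ * W₂ᴴ + W₂ * W₁ᴴ).PosSemidef) :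
    IsMaxDissipativeRel
      (Submodule.map ((A₀.adjoint.domain.subtype).prod A₀.adjoint.toFun)
        (LinearMap.ker (W₁.mulVecLin.comp B₁ + W₂.mulVecLin.comp B₂))) := by
  classical
  have hkey := matkey W₁ W₂ hrank hpos
  -- the adjoint as formal adjoint
  have hSadj : ∀ (x : A₀.adjoint.domain) (y : A₀.domain),
      (inner ℂ (A₀.adjoint x) ((y : X)) : ℂ) = inner ℂ ((x : X)) (A₀ y) :=
    fun x y => LinearPMap.adjoint_isFormalAdjoint hdense x y
  -- -A₀ is contained in the adjoint
  have hfa : A₀.IsFormalAdjoint (-A₀) := by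
    intro x y
    show (inner ℂ (A₀ x) (((y : X))) : ℂ) = inner ℂ ((x : X)) ((-A₀) y)
    rw [LinearPMap.neg_apply, inner_neg_right, hskew]
  have hle : -A₀ ≤ A₀.adjoint := hfa.le_adjoint hdense
  have hdomle : A₀.domain ≤ A₀.adjoint.domain := hle.1
  have hSneg : ∀ a : A₀.domain, A₀.adjoint ⟨(a : X), hdomle a.2⟩ = -(A₀ a) := by
    intro a
    have := hle.2 (x := a) (y := ⟨(a : X), hdomle a.2⟩) rfl
    rw [LinearPMap.neg_apply] at this
    exact this.symm
  -- dissipativity on the kernel of the boundary condition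
  have hdiss : ∀ x : A₀.adjoint.domain, W₁ *ᵥ B₁ x + W₂ *ᵥ B₂ x = 0 →
      (inner ℂ ((x : X)) (A₀.adjoint x) : ℂ).re ≤ 0 := by
    intro x hx
    have hg := hgreen x x
    rw [← inner_conj_symm ((x : X)) (A₀.adjoint x)] at hg
    rw [star_dot_comm (B₁ x) (B₂ x)] at hg
    have hre := congrArg Complex.re hg
    simp only [Complex.add_re, Complex.conj_re] at hre
    have hcc : (inner ℂ ((x : X)) (A₀.adjoint x) : ℂ).re
        = (inner ℂ (A₀.adjoint x) ((x : X)) : ℂ).re := by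
      simpa using inner_re_symm (𝕜 := ℂ) ((x : X)) (A₀.adjoint x)
    have : (inner ℂ ((x : X)) (A₀.adjoint x) : ℂ).re = (star (B₁ x) ⬝ᵥ B₂ x : ℂ).re := by
      linarith
    rw [this]
    exact hkey _ _ hx
  -- boundary maps vanish on the domain of A₀
  have hB0 : ∀ x : A₀.adjoint.domain, (x : X) ∈ A₀.domain → B₁ x = 0 ∧ B₂ x = 0 := by
    intro x hx
    have key : ∀ y : A₀.adjoint.domain, star (B₁ x) ⬝ᵥ B₂ y + star (B₂ x) ⬝ᵥ B₁ y = 0 := by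
      intro y
      rw [← hgreen x y]
      have h1 : A₀.adjoint x = -(A₀ ⟨(x : X), hx⟩) := by
        have := hle.2 (x := (⟨(x : X), hx⟩ : A₀.domain)) (y := x) rfl
        rw [LinearPMap.neg_apply] at this
        exact this.symm
      have h2 : (inner ℂ ((x : X)) (A₀.adjoint y) : ℂ) = inner ℂ (A₀ ⟨(x : X), hx⟩) ((y : X)) := by
        rw [← inner_conj_symm, ← inner_conj_symm (A₀ ⟨(x : X), hx⟩)]
        congr 1
        exact hSadj y ⟨(x : X), hx⟩
      rw [h1, h2, inner_neg_left]
      ring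
    obtain ⟨y, hy⟩ := hsurj (B₂ x, B₁ x)
    simp only [Prod.mk.injEq] at hy
    have hkey2 := key y
    rw [hy.1, hy.2] at hkey2
    have t1 : (0:ℂ) ≤ star (B₁ x) ⬝ᵥ B₁ x := dotProduct_star_self_nonneg _
    have t2 : (0:ℂ) ≤ star (B₂ x) ⬝ᵥ B₂ x := dotProduct_star_self_nonneg _
    constructor
    · apply dotProduct_star_self_eq_zero.mp
      apply le_antisymm _ t1
      calc star (B₁ x) ⬝ᵥ B₁ x ≤ star (B₁ x) ⬝ᵥ B₁ x + star (B₂ x) ⬝ᵥ B₂ x :=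
            le_add_of_nonneg_right t2
        _ = 0 := hkey2
    · apply dotProduct_star_self_eq_zero.mp
      apply le_antisymm _ t2
      calc star (B₂ x) ⬝ᵥ B₂ x ≤ star (B₁ x) ⬝ᵥ B₁ x + star (B₂ x) ⬝ᵥ B₂ x :=
            le_add_of_nonneg_left t1
        _ = 0 := hkey2
  -- the eigenspaces N₊, N₋ of the adjoint
  set Np : Submodule ℂ A₀.adjoint.domain :=
    LinearMap.ker (A₀.adjoint.toFun - A₀.adjoint.domain.subtype) with hNpdef
  set Nm : Submodule ℂ A₀.adjoint.domain :=
    LinearMap.ker (A₀.adjoint.toFun + A₀.adjoint.domain.subtype) with hNmdef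
  have hNp : ∀ x : A₀.adjoint.domain, x ∈ Np ↔ A₀.adjoint x = (x : X) := by
    intro x
    rw [hNpdef, LinearMap.mem_ker, LinearMap.sub_apply, sub_eq_zero]
    rfl
  have hNm : ∀ x : A₀.adjoint.domain, x ∈ Nm ↔ A₀.adjoint x = -(x : X) := by
    intro x
    rw [hNmdef, LinearMap.mem_ker, LinearMap.add_apply, add_eq_zero_iff_eq_neg]
    rfl
  -- the boundary map
  set Γ : A₀.adjoint.domain →ₗ[ℂ] (Fin (2 * k) → ℂ) × (Fin (2 * k) → ℂ) := B₁.prod B₂ with hΓdef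
  have hΓ : ∀ x : A₀.adjoint.domain, Γ x = (B₁ x, B₂ x) := fun x => rfl
  set Lp : Submodule ℂ ((Fin (2 * k) → ℂ) × (Fin (2 * k) → ℂ)) := Submodule.map Γ Np with hLpdef
  set Lm : Submodule ℂ ((Fin (2 * k) → ℂ) × (Fin (2 * k) → ℂ)) := Submodule.map Γ Nm with hLmdef
  -- Green's identity on N₊ and N₋
  have hNpB : ∀ x : A₀.adjoint.domain, x ∈ Np →
      star (B₁ x) ⬝ᵥ B₂ x + star (B₂ x) ⬝ᵥ B₁ x = 2 * (inner ℂ ((x : X)) ((x : X)) : ℂ) := by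
    intro x hx
    rw [← hgreen x x, (hNp x).mp hx, two_mul]
  have hNmB : ∀ x : A₀.adjoint.domain, x ∈ Nm →
      star (B₁ x) ⬝ᵥ B₂ x + star (B₂ x) ⬝ᵥ B₁ x = -(2 * (inner ℂ ((x : X)) ((x : X)) : ℂ)) := by
    intro x hx
    rw [← hgreen x x, (hNm x).mp hx, inner_neg_left, inner_neg_right, two_mul]
    rw [← inner_conj_symm ((x : X)) ((x : X)), inner_self_conj]
    ring
  -- positivity of L₊ and negativity of L₋
  have hdot_re : ∀ x : A₀.adjoint.domain,
      (star (B₁ x) ⬝ᵥ B₂ x + star (B₂ x) ⬝ᵥ B₁ x : ℂ).re = 2 * (star (B₁ x) ⬝ᵥ B₂ x : ℂ).re := by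
    intro x
    rw [star_dot_comm (B₁ x) (B₂ x)]
    simp only [Complex.add_re, Complex.conj_re]
    ring
  have hLp_pos : ∀ ξ ∈ Lp, ξ ≠ 0 → 0 < (star ξ.1 ⬝ᵥ ξ.2 : ℂ).re := by
    rintro ξ ⟨x, hx, rfl⟩ hne
    have hxne : ((x : X)) ≠ 0 := by
      intro h0
      apply hne
      have : x = 0 := Subtype.ext h0
      rw [this, map_zero]
    have := congrArg Complex.re (hNpB x hx)
    rw [hdot_re x] at this
    have hself : (inner ℂ ((x : X)) ((x : X)) : ℂ) = ((‖(x : X)‖ : ℂ))^2 :=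
      inner_self_eq_norm_sq_to_K _
    rw [hself] at this
    have h2 : (2 * ((‖(x : X)‖ : ℂ))^2).re = 2 * ‖(x : X)‖^2 := by
      rw [← Complex.ofReal_pow, ← Complex.ofReal_ofNat, ← Complex.ofReal_mul, Complex.ofReal_re]
    rw [h2] at this
    have hpos' : 0 < ‖(x : X)‖^2 := pow_pos (norm_pos_iff.mpr hxne) 2
    have : (star (B₁ x) ⬝ᵥ B₂ x : ℂ).re = ‖(x : X)‖^2 := by linarith
    rw [hΓ x]
    simpa [this] using hpos'
  have hLm_neg : ∀ ξ ∈ Lm, ξ ≠ 0 → (star ξ.1 ⬝ᵥ ξ.2 : ℂ).re < 0 := by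
    rintro ξ ⟨x, hx, rfl⟩ hne
    have hxne : ((x : X)) ≠ 0 := by
      intro h0
      apply hne
      have : x = 0 := Subtype.ext h0
      rw [this, map_zero]
    have := congrArg Complex.re (hNmB x hx)
    rw [hdot_re x] at this
    have hself : (inner ℂ ((x : X)) ((x : X)) : ℂ) = ((‖(x : X)‖ : ℂ))^2 :=
      inner_self_eq_norm_sq_to_K _
    rw [hself] at this
    have h2 : (-(2 * ((‖(x : X)‖ : ℂ))^2)).re = -(2 * ‖(x : X)‖^2) := by
      rw [← Complex.ofReal_pow, ← Complex.ofReal_ofNat, ← Complex.ofReal_mul,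
        ← Complex.ofReal_neg, Complex.ofReal_re]
    rw [h2] at this
    have hpos' : 0 < ‖(x : X)‖^2 := pow_pos (norm_pos_iff.mpr hxne) 2
    have : (star (B₁ x) ⬝ᵥ B₂ x : ℂ).re = -‖(x : X)‖^2 := by linarith
    rw [hΓ x]
    simpa [this] using hpos'
  -- the deficiency decomposition
  set R : Submodule ℂ X := LinearMap.range (A₀.domain.subtype + A₀.toFun) with hRdef
  have hsk0 : ∀ a : A₀.domain, (inner ℂ ((a : X)) (A₀ a) : ℂ).re = 0 := by
    intro a
    have h1 := hskew a a
    have h2 := congrArg Complex.re h1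
    rw [Complex.neg_re] at h2
    have h3 : (inner ℂ (A₀ a) ((a : X)) : ℂ).re = (inner ℂ ((a : X)) (A₀ a) : ℂ).re := by
      simpa using inner_re_symm (𝕜 := ℂ) (A₀ a) ((a : X))
    linarith
  have hRclosed : IsClosed (R : Set X) := range_closed A₀ hclosed hsk0
  haveI : CompleteSpace R := hRclosed.completeSpace_coe
  have hmemR : ∀ a : A₀.domain, ((a : X) + A₀ a) ∈ R := by
    intro a
    exact ⟨a, by simp [LinearMap.add_apply, LinearPMap.toFun_eq_coe]⟩
  have horth : ∀ f : X, f ∈ Rᗮ → ∃ hf : f ∈ A₀.adjoint.domain,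
      A₀.adjoint ⟨f, hf⟩ = -f := by
    intro f hf
    have hw : ∀ a : A₀.domain, (inner ℂ (-f) ((a : X)) : ℂ) = inner ℂ f (A₀ a) := by
      intro a
      have h0 : (inner ℂ ((a : X) + A₀ a) f : ℂ) = 0 :=
        (Submodule.mem_orthogonal R f).mp hf _ (hmemR a)
      rw [inner_add_left] at h0
      have h1 := congrArg (starRingEnd ℂ) h0
      rw [map_add, inner_conj_symm, inner_conj_symm, map_zero] at h1
      rw [inner_neg_left]
      linear_combination -h1
    have hmem : f ∈ A₀.adjoint.domain :=
      LinearPMap.mem_adjoint_domain_of_exists f ⟨-f, fun a => hw a⟩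
    exact ⟨hmem, LinearPMap.adjoint_apply_eq hdense ⟨f, hmem⟩ (fun a => hw a)⟩
  have hdecomp : ∀ f : X, ∃ (a : A₀.domain) (m : A₀.adjoint.domain),
      m ∈ Nm ∧ f = ((a : X) + A₀ a) + (m : X) := by
    intro f
    obtain ⟨r, hr, m, hm, hf⟩ := R.exists_add_mem_mem_orthogonal f
    obtain ⟨a, ha⟩ := hr
    obtain ⟨hm1, hm2⟩ := horth m hm
    refine ⟨a, ⟨m, hm1⟩, (hNm _).mpr hm2, ?_⟩
    rw [hf, ← ha]
    simp [LinearMap.add_apply, LinearPMap.toFun_eq_coe]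
  -- every boundary value decomposes along L₊ and L₋
  have hsup : ∀ ζ : (Fin (2 * k) → ℂ) × (Fin (2 * k) → ℂ), ζ ∈ Lp ⊔ Lm := by
    intro ζ
    obtain ⟨x, hx⟩ := hsurj ζ
    obtain ⟨a, m, hmNm, hfeq⟩ := hdecomp ((x : X) - A₀.adjoint x)
    set a' : A₀.adjoint.domain := ⟨(a : X), hdomle a.2⟩ with ha'def
    have hSa' : A₀.adjoint a' = -(A₀ a) := hSneg a
    have hSm : A₀.adjoint m = -(m : X) := (hNm m).mp hmNm
    have hnn : (x - a' - (2⁻¹ : ℂ) • m) ∈ Np := by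
      rw [hNp]
      rw [LinearPMap.map_sub, LinearPMap.map_sub, LinearPMap.map_smul, hSa', hSm]
      have hcoe : ((x - a' - (2⁻¹ : ℂ) • m : A₀.adjoint.domain) : X)
          = (x : X) - (a : X) - (2⁻¹ : ℂ) • (m : X) := by
        simp [ha'def]
      rw [hcoe]
      have hSx : A₀.adjoint x = (x : X) - (((a : X) + A₀ a) + (m : X)) := by
        rw [← hfeq]; abel
      rw [hSx, smul_neg]
      module
    have hxsplit : x = (x - a' - (2⁻¹ : ℂ) • m) + a' + (2⁻¹ : ℂ) • m := by abel
    have hΓa' : Γ a' = 0 := by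
      obtain ⟨e1, e2⟩ := hB0 a' a.2
      rw [hΓ a', e1, e2]
      rfl
    have hζ : ζ = Γ (x - a' - (2⁻¹ : ℂ) • m) + (2⁻¹ : ℂ) • Γ m := by
      have e1 : Γ (x - a' - (2⁻¹ : ℂ) • m) + (2⁻¹ : ℂ) • Γ m = Γ x - Γ a' := by
        rw [map_sub, map_sub, LinearMap.map_smul]
        abel
      rw [e1, hΓa', sub_zero, hΓ x]
      exact hx.symm
    rw [hζ]
    exact Submodule.add_mem _
      (Submodule.mem_sup_left ⟨_, hnn, rfl⟩)
      (Submodule.mem_sup_right (Submodule.smul_mem _ _ ⟨m, hmNm, rfl⟩))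
  -- dimension count
  have hLm_le : Module.finrank ℂ Lm ≤ 2 * k := neg_dim_le Lm hLm_neg
  have htop : Lp ⊔ Lm = ⊤ := by
    rw [eq_top_iff]
    intro ζ _
    exact hsup ζ
  have hfrprod : Module.finrank ℂ ((Fin (2 * k) → ℂ) × (Fin (2 * k) → ℂ)) = 2 * k + 2 * k := by
    rw [Module.finrank_prod, Module.finrank_pi]
    simp
  haveI hfin : FiniteDimensional ℂ ((Fin (2 * k) → ℂ) × (Fin (2 * k) → ℂ)) := inferInstance
  haveI : FiniteDimensional ℂ Lp := FiniteDimensional.finiteDimensional_submodule Lp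
  haveI : FiniteDimensional ℂ Lm := FiniteDimensional.finiteDimensional_submodule Lm
  have hsum := Submodule.finrank_sup_add_finrank_inf_eq Lp Lm
  have htopfr : Module.finrank ℂ ↥(Lp ⊔ Lm) = 2 * k + 2 * k := by
    rw [htop, finrank_top, hfrprod]
  have hLp_ge : 2 * k ≤ Module.finrank ℂ Lp := by omega
  -- the boundary-condition map is surjective from L₊
  set M : ((Fin (2 * k) → ℂ) × (Fin (2 * k) → ℂ)) →ₗ[ℂ] (Fin (2 * k) → ℂ) :=
    W₁.mulVecLin.comp (LinearMap.fst ℂ _ _) + W₂.mulVecLin.comp (LinearMap.snd ℂ _ _) with hMdef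
  have hM : ∀ ξ : (Fin (2 * k) → ℂ) × (Fin (2 * k) → ℂ), M ξ = W₁ *ᵥ ξ.1 + W₂ *ᵥ ξ.2 :=
    fun ξ => rfl
  have hMinj : Function.Injective (M.domRestrict Lp) := by
    rw [← LinearMap.ker_eq_bot, LinearMap.ker_eq_bot']
    intro ξ hξ
    rw [LinearMap.domRestrict_apply, hM] at hξ
    by_contra hne
    have hne' : (ξ : (Fin (2 * k) → ℂ) × (Fin (2 * k) → ℂ)) ≠ 0 := fun h => hne (Subtype.ext h)
    exact absurd (hkey _ _ hξ) (not_le.mpr (hLp_pos _ ξ.2 hne'))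
  have hMtop : ∀ t : Fin (2 * k) → ℂ, ∃ ξ, ξ ∈ Lp ∧ W₁ *ᵥ ξ.1 + W₂ *ᵥ ξ.2 = t := by
    intro t
    have hr1 : Module.finrank ℂ (LinearMap.range (M.domRestrict Lp)) = Module.finrank ℂ Lp :=
      LinearMap.finrank_range_of_inj hMinj
    have hle1 : Module.finrank ℂ (LinearMap.range (M.domRestrict Lp)) ≤ 2 * k := by
      have h := Submodule.finrank_le (LinearMap.range (M.domRestrict Lp))
      have h2 : Module.finrank ℂ (Fin (2 * k) → ℂ) = 2 * k := by
        rw [Module.finrank_pi]; simp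
      omega
    have heq2 : LinearMap.range (M.domRestrict Lp) = ⊤ := by
      apply Submodule.eq_top_of_finrank_eq
      have h2 : Module.finrank ℂ (Fin (2 * k) → ℂ) = 2 * k := by
        rw [Module.finrank_pi]; simp
      omega
    have ht : t ∈ LinearMap.range (M.domRestrict Lp) := heq2 ▸ Submodule.mem_top
    obtain ⟨ξ, hξ⟩ := ht
    rw [LinearMap.domRestrict_apply, hM] at hξ
    exact ⟨ξ, ξ.2, hξ⟩
  -- surjectivity of 1 - 𝔄
  have hsurj1 : ∀ f : X, ∃ x : A₀.adjoint.domain,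
      W₁ *ᵥ B₁ x + W₂ *ᵥ B₂ x = 0 ∧ (x : X) - A₀.adjoint x = f := by
    intro f
    obtain ⟨a, m, hmNm, hfeq⟩ := hdecomp f
    set a' : A₀.adjoint.domain := ⟨(a : X), hdomle a.2⟩ with ha'def
    have hSa' : A₀.adjoint a' = -(A₀ a) := hSneg a
    have hSm : A₀.adjoint m = -(m : X) := (hNm m).mp hmNm
    obtain ⟨x₀, hx₀f⟩ : ∃ x₀ : A₀.adjoint.domain, (x₀ : X) - A₀.adjoint x₀ = f := by
      refine ⟨a' + (2⁻¹ : ℂ) • m, ?_⟩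
      rw [LinearPMap.map_add, LinearPMap.map_smul, hSa', hSm]
      have hcoe : ((a' + (2⁻¹ : ℂ) • m : A₀.adjoint.domain) : X)
          = (a : X) + (2⁻¹ : ℂ) • (m : X) := by simp [ha'def]
      rw [hcoe, hfeq, smul_neg]
      module
    obtain ⟨ξ, hξLp, hξM⟩ := hMtop (-(W₁ *ᵥ B₁ x₀ + W₂ *ᵥ B₂ x₀))
    obtain ⟨nn, hnnNp, hnnΓ⟩ := hξLp
    have hB1nn : B₁ nn = ξ.1 := by rw [← hnnΓ]; rfl
    have hB2nn : B₂ nn = ξ.2 := by rw [← hnnΓ]; rfl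
    refine ⟨x₀ + nn, ?_, ?_⟩
    · rw [map_add, map_add, mulVec_add, mulVec_add, hB1nn, hB2nn]
      have hrw : W₁ *ᵥ B₁ x₀ + W₁ *ᵥ ξ.1 + (W₂ *ᵥ B₂ x₀ + W₂ *ᵥ ξ.2)
          = (W₁ *ᵥ B₁ x₀ + W₂ *ᵥ B₂ x₀) + (W₁ *ᵥ ξ.1 + W₂ *ᵥ ξ.2) := by abel
      rw [hrw, hξM]
      abel
    · have hSnn : A₀.adjoint nn = (nn : X) := (hNp nn).mp hnnNp
      rw [LinearPMap.map_add, hSnn]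
      have hcoe2 : ((x₀ + nn : A₀.adjoint.domain) : X) = (x₀ : X) + (nn : X) := rfl
      rw [hcoe2]
      have : (x₀ : X) + (nn : X) - (A₀.adjoint x₀ + (nn : X))
          = (x₀ : X) - A₀.adjoint x₀ := by abel
      rw [this, hx₀f]
  -- final assembly
  constructor
  · -- dissipativity
    intro p hp
    obtain ⟨x, hxker, hxp⟩ := Submodule.mem_map.mp hp
    rw [LinearMap.mem_ker, LinearMap.add_apply, LinearMap.comp_apply, LinearMap.comp_apply,
      Matrix.mulVecLin_apply, Matrix.mulVecLin_apply] at hxker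
    have hxp1 : p = ((x : X), A₀.adjoint x) := by
      rw [← hxp]; rfl
    rw [hxp1]
    exact hdiss x hxker
  · -- maximality
    intro T' hT' hle'
    apply le_antisymm _ hle'
    intro p hp
    obtain ⟨z, hz1, hz2⟩ := hsurj1 (p.1 - p.2)
    have hzker : z ∈ LinearMap.ker (W₁.mulVecLin.comp B₁ + W₂.mulVecLin.comp B₂) := by
      rw [LinearMap.mem_ker, LinearMap.add_apply, LinearMap.comp_apply, LinearMap.comp_apply,
        Matrix.mulVecLin_apply, Matrix.mulVecLin_apply]
      exact hz1
    have hzT : ((z : X), A₀.adjoint z) ∈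
        (Submodule.map ((A₀.adjoint.domain.subtype).prod A₀.adjoint.toFun)
          (LinearMap.ker (W₁.mulVecLin.comp B₁ + W₂.mulVecLin.comp B₂))) :=
      Submodule.mem_map.mpr ⟨z, hzker, rfl⟩
    have hq : p - ((z : X), A₀.adjoint z) ∈ T' := T'.sub_mem hp (hle' hzT)
    have hdis := hT' _ hq
    simp only [Prod.fst_sub, Prod.snd_sub] at hdis
    have hd : p.2 - A₀.adjoint z = p.1 - (z : X) := by
      have h0 : (p.2 - A₀.adjoint z) - (p.1 - (z : X))
          = ((z : X) - A₀.adjoint z) - (p.1 - p.2) := by abel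
      rw [hz2, sub_self] at h0
      exact sub_eq_zero.mp h0
    rw [hd] at hdis
    have hself : (inner ℂ (p.1 - (z : X)) (p.1 - (z : X)) : ℂ)
        = ((‖p.1 - (z : X)‖ : ℂ))^2 := inner_self_eq_norm_sq_to_K _
    rw [hself] at hdis
    have hre0 : ‖p.1 - (z : X)‖^2 ≤ 0 := by
      rw [← Complex.ofReal_pow, Complex.ofReal_re] at hdis
      exact hdis
    have hzero : p.1 - (z : X) = 0 := by
      have : ‖p.1 - (z : X)‖ = 0 := by nlinarith [norm_nonneg (p.1 - (z : X))]
      exact norm_eq_zero.mp this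
    have hp1 : p.1 = (z : X) := sub_eq_zero.mp hzero
    have hp2 : p.2 = A₀.adjoint z := by
      rw [hp1, sub_self] at hd
      exact sub_eq_zero.mp hd
    have : p = ((z : X), A₀.adjoint z) := Prod.ext hp1 hp2
    rw [this]
    exact hzT
end
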